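/- arXiv:1601.06390 — 3 statements merged into one kernel-verified Lean document; each statement's English description precedes it below -/
import Mathlib

section
/- Let u ∈ 𝒜_n^* and i ∈ {1,...,n−1}. If the quasi-Kashiwara operator e_i is defined on u, then the Kashiwara operator ẽ_i is defined on u and ẽ_i(u) = e_i(u). Likewise, if f_i is defined on u, then f̃_i is defined on u and f̃_i(u) = f_i(u). -/
/-!
Common setup: words over the alphabet `𝒜_n = {1,…,n}` (modelled as `List ℕ`),
quasi-Kashiwara operators, the quasi-crystal graph, Kashiwara operators,
quasi-ribbon words, and the hypoplactic congruence.
-/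

namespace HypoCrystal

noncomputable section
open scoped Classical

/-- `u` is a word over the alphabet `𝒜_n = {1,…,n}`. -/
def IsWord (n : ℕ) (u : List ℕ) : Prop := ∀ a ∈ u, 1 ≤ a ∧ a ≤ n

/-- `u` has an `i`-inversion: some letter `i+1` occurs strictly to the left of some letter `i`. -/
def HasInv (i : ℕ) (u : List ℕ) : Prop :=
  ∃ v w x : List ℕ, u = v ++ (i + 1) :: w ++ i :: x

/-- Replace the first (leftmost) occurrence of `a` by `b`, if any; otherwise `none`. -/
def replaceFirst (a b : ℕ) : List ℕ → Option (List ℕ)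
  | [] => none
  | x :: xs => if x = a then some (b :: xs) else (replaceFirst a b xs).map (x :: ·)

/-- The quasi-Kashiwara raising operator `e_i` (partial map, `none` = undefined):
if `u` has an `i`-inversion it is undefined; otherwise it replaces the leftmost
letter `i+1` by `i` (undefined if there is no letter `i+1`). -/
def qe (i : ℕ) (u : List ℕ) : Option (List ℕ) :=
  if HasInv i u then none else replaceFirst (i + 1) i u

/-- The quasi-Kashiwara lowering operator `f_i` (partial map, `none` = undefined):
if `u` has an `i`-inversion it is undefined; otherwise it replaces the rightmost
letter `i` by `i+1` (undefined if there is no letter `i`). -/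
def qf (i : ℕ) (u : List ℕ) : Option (List ℕ) :=
  if HasInv i u then none else (replaceFirst i (i + 1) u.reverse).map List.reverse

/-- Weight of a word: `wt u a` is the number of occurrences of the letter `a` in `u`. -/
def wt (u : List ℕ) : ℕ → ℕ := fun a => u.count a

/-- There is an edge labelled `i` from `u` to `v` in the quasi-crystal graph `Γ(hypo_n)`. -/
def Edge (n i : ℕ) (u v : List ℕ) : Prop := 1 ≤ i ∧ i < n ∧ qf i u = some v

/-- `u` and `v` are adjacent (in the underlying undirected graph) in `Γ(hypo_n)`. -/
def Adj (n : ℕ) (u v : List ℕ) : Prop := ∃ i, Edge n i u v ∨ Edge n i v u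

/-- `v` lies in the connected component `Γ(hypo_n, u)` of `u` in the quasi-crystal graph. -/
def SameComp (n : ℕ) : List ℕ → List ℕ → Prop := Relation.ReflTransGen (Adj n)

/-- `u` is a highest-weight word: no raising operator `e_i` is defined on `u`. -/
def HighestWeight (n : ℕ) (u : List ℕ) : Prop := ∀ i, 1 ≤ i → i < n → qe i u = none

/-- `θ` is a quasi-crystal isomorphism from the component of `u` onto the component of `v`:
a weight-preserving bijection preserving labelled edges in both directions. -/
def IsQCIso (n : ℕ) (u v : List ℕ) (θ : List ℕ → List ℕ) : Prop :=
  Set.BijOn θ {x | SameComp n u x} {y | SameComp n v y} ∧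
  (∀ x, SameComp n u x → wt (θ x) = wt x) ∧
  (∀ x y, SameComp n u x → SameComp n u y → ∀ i, (Edge n i x y ↔ Edge n i (θ x) (θ y)))

/-- `u ∼ v`: there is a quasi-crystal isomorphism between the components of `u` and `v`
taking `u` to `v`. -/
def Sim (n : ℕ) (u v : List ℕ) : Prop :=
  ∃ θ : List ℕ → List ℕ, IsQCIso n u v θ ∧ θ u = v

/-- The standardization of `u`: position `k` receives the rank (starting at 1) of the
pair `(u_k, k)` among all pairs `(u_l, l)` ordered lexicographically. -/
def std (u : List ℕ) : List ℕ :=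
  (List.range u.length).map fun k =>
    1 + ((List.range u.length).filter fun l =>
      u.getD l 0 < u.getD k 0 ∨ (u.getD l 0 = u.getD k 0 ∧ l < k)).length

/-- The maximal strictly decreasing factors of a word (the columns of its
quasi-ribbon tabloid, each read bottom-to-top). -/
def decFactors : List ℕ → List (List ℕ)
  | [] => []
  | a :: rest =>
    match decFactors rest with
    | (b :: f) :: fs => if b < a then (a :: b :: f) :: fs else [a] :: (b :: f) :: fs
    | l => [a] :: l

/-- `w` is a quasi-ribbon word: its quasi-ribbon tabloid is a quasi-ribbon tableau,
i.e. the bottom entry of each column is ≤ the top entry of the next column. -/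
def IsQRWord (w : List ℕ) : Prop :=
  (decFactors w).Chain' fun c d => c.headD 0 ≤ d.getLastD 0

/-- Row lengths (top to bottom) of the ribbon diagram whose column heights
(left to right) are given. -/
def rowLengths : List ℕ → List ℕ
  | [] => []
  | [d] => List.replicate d 1
  | d :: e :: rest =>
    List.replicate (d - 1) 1 ++
      (match rowLengths (e :: rest) with
       | [] => [1]
       | r :: rs => (r + 1) :: rs)

/-- The shape (as a composition, listed top row first) of the quasi-ribbon tabloid of `w`. -/
def shape (w : List ℕ) : List ℕ := rowLengths ((decFactors w).map List.length)

/-- Columns of the quasi-ribbon tableau of shape `α` whose `j`-th row consists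
entirely of symbols `j`, where rows are labelled starting from `j₀`. -/
def hwCols : List ℕ → ℕ → List (List ℕ)
  | [], _ => []
  | [a], j => List.replicate a [j]
  | a :: b :: rest, j =>
    List.replicate (a - 1) [j] ++
      (match hwCols (b :: rest) (j + 1) with
       | [] => [[j]]
       | c :: cs => (c ++ [j]) :: cs)

/-- The column reading of the quasi-ribbon tableau of shape `α` whose `j`-th row
consists entirely of symbols `j`. -/
def hwQR (α : List ℕ) : List ℕ := (hwCols α 1).flatten

/-- The defining relations `R_hypo` of the hypoplactic monoid of rank `n`. -/
inductive HypoRel (n : ℕ) : List ℕ → List ℕ → Prop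
  | knuth1 {a b c : ℕ} : 1 ≤ a → a ≤ b → b < c → c ≤ n → HypoRel n [a, c, b] [c, a, b]
  | knuth2 {a b c : ℕ} : 1 ≤ a → a < b → b ≤ c → c ≤ n → HypoRel n [b, a, c] [b, c, a]
  | quasi1 {a b c d : ℕ} : 1 ≤ a → a ≤ b → b < c → c ≤ d → d ≤ n →
      HypoRel n [c, a, d, b] [a, c, b, d]
  | quasi2 {a b c d : ℕ} : 1 ≤ a → a < b → b ≤ c → c < d → d ≤ n →
      HypoRel n [b, d, a, c] [d, b, c, a]

/-- The hypoplactic congruence `≡_hypo`: the congruence on the free monoid generated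
by the relations `R_hypo`. -/
inductive HypoCong (n : ℕ) : List ℕ → List ℕ → Prop
  | of {u v} : HypoRel n u v → HypoCong n u v
  | refl (u) : HypoCong n u u
  | symm {u v} : HypoCong n u v → HypoCong n v u
  | trans {u v w} : HypoCong n u v → HypoCong n v w → HypoCong n u w
  | append {u v u' v'} : HypoCong n u v → HypoCong n u' v' →
      HypoCong n (u ++ u') (v ++ v')

/-- The signature word of `u` for index `i`: each letter `i` becomes `(position, true)`
(that is, `+`) and each letter `i+1` becomes `(position, false)` (that is, `−`). -/
def signWord (i : ℕ) (u : List ℕ) : List (ℕ × Bool) :=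
  (u.zipIdx.map Prod.swap).filterMap fun pa =>
    if pa.2 = i then some (pa.1, true)
    else if pa.2 = i + 1 then some (pa.1, false) else none

/-- Iteratively delete factors `−+` from a signature word, producing the reduced
word `+^p −^q`. -/
def reduce : List (ℕ × Bool) → List (ℕ × Bool)
  | [] => []
  | x :: rest =>
    match reduce rest with
    | y :: rest' => if x.2 = false ∧ y.2 = true then rest' else x :: y :: rest'
    | [] => [x]

/-- The Kashiwara raising operator `ẽ_i`, computed by the signature rule: change to `i`
the letter `i+1` corresponding to the leftmost `−` of the reduced signature word. -/
def KE (i : ℕ) (u : List ℕ) : Option (List ℕ) :=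
  (((reduce (signWord i u)).filter fun x => !x.2).head?).map fun x => u.set x.1 i

/-- The Kashiwara lowering operator `f̃_i`, computed by the signature rule: change to `i+1`
the letter `i` corresponding to the rightmost `+` of the reduced signature word. -/
def KF (i : ℕ) (u : List ℕ) : Option (List ℕ) :=
  (((reduce (signWord i u)).filter fun x => x.2).getLast?).map fun x => u.set x.1 (i + 1)

/-- The Schützenberger involution on `𝒜_n^*`: reverse the word and replace each
letter `a` by `n − a + 1`. -/
def sharp (n : ℕ) (u : List ℕ) : List ℕ := u.reverse.map fun a => n + 1 - a

/-- The largest letter occurring in `u` (0 for the empty word). -/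
def maxLetter (u : List ℕ) : ℕ := u.foldr max 0

/-- `β` is coarser than `α` (`β ⪯ α`): they have the same weight and every proper
partial sum of `β` is a proper partial sum of `α`. -/
def Coarser (β α : List ℕ) : Prop :=
  β.sum = α.sum ∧ ∀ p < β.length, ∃ m < α.length, (β.take p).sum = (α.take m).sum

end
end HypoCrystal

namespace HypoCrystal


section Aux

private lemma replaceFirst_eq_findIdx (a b : ℕ) :
    ∀ u : List ℕ, replaceFirst a b u = (u.findIdx? (· == a)).map (fun p => u.set p b) := by
  intro u
  induction u with
  | nil => rfl
  | cons x xs ih =>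
    by_cases h : x = a
    · simp [replaceFirst, h, List.findIdx?_cons]
    · simp only [replaceFirst, if_neg h, ih, List.findIdx?_cons, beq_iff_eq, if_neg h,
        Option.map_map]
      rfl

private lemma hasInv_of_indices {i : ℕ} {u : List ℕ} {p q : ℕ} (hpq : p < q)
    (hp : u[p]? = some (i + 1)) (hq : u[q]? = some i) : HasInv i u := by
  obtain ⟨hql, hq⟩ := List.getElem?_eq_some_iff.mp hq
  obtain ⟨hpl, hp⟩ := List.getElem?_eq_some_iff.mp hp
  refine ⟨u.take p, (u.drop (p+1)).take (q - p - 1), u.drop (q+1), ?_⟩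
  have e2 : u.drop (p+1) = (u.drop (p+1)).take (q - p - 1) ++ u[q] :: u.drop (q+1) := by
    rw [← List.drop_eq_getElem_cons hql]
    have h4 : u.drop q = ((u.drop (p+1)).drop (q - p - 1)) := by
      rw [List.drop_drop]
      congr 1
      omega
    rw [h4, List.take_append_drop]
  have e1 : u = u.take p ++ u[p] :: u.drop (p+1) := by
    rw [← List.drop_eq_getElem_cons hpl, List.take_append_drop]
  conv_lhs => rw [e1, e2, hp, hq]
  simp

/-- The relation: a `false` may not be followed by a `true`. -/
private def NoFT (x y : ℕ × Bool) : Prop := x.2 = false → y.2 = false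

private lemma reduce_eq_self {l : List (ℕ × Bool)} (h : l.Pairwise NoFT) : reduce l = l := by
  induction l with
  | nil => rfl
  | cons x rest ih =>
    rw [List.pairwise_cons] at h
    have hred : reduce rest = rest := ih h.2
    show (match reduce rest with
      | y :: rest' => if x.2 = false ∧ y.2 = true then rest' else x :: y :: rest'
      | [] => [x]) = x :: rest
    rw [hred]
    cases rest with
    | nil => rfl
    | cons y rest' =>
      show (if x.2 = false ∧ y.2 = true then rest' else x :: y :: rest') = x :: y :: rest'
      have hc : ¬ (x.2 = false ∧ y.2 = true) := by
        rintro ⟨h1, h2⟩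
        have := h.1 y List.mem_cons_self h1
        rw [this] at h2
        exact Bool.false_ne_true h2
      rw [if_neg hc]

private lemma signWord_pairwise {i : ℕ} {u : List ℕ} (h : ¬ HasInv i u) :
    (signWord i u).Pairwise NoFT := by
  rw [signWord, List.pairwise_filterMap, List.pairwise_iff_getElem]
  intro j k hj hk hjk
  rw [List.length_map, List.length_zipIdx] at hj hk
  intro x hx y hy hxf
  simp only [List.getElem_map, List.getElem_zipIdx] at hx hy
  simp only [Option.mem_def, Prod.swap_prod_mk, Nat.zero_add] at hx hy
  by_cases h1 : u[k] = i
  · -- then `u[j]` must be `i + 1`, giving an inversion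
    exfalso
    have hxj : u[j] = i + 1 := by
      by_cases g1 : u[j] = i
      · rw [if_pos g1] at hx
        rw [← Option.some_inj.mp hx] at hxf
        exact absurd hxf (by simp)
      · by_cases g2 : u[j] = i + 1
        · exact g2
        · rw [if_neg g1, if_neg g2] at hx; simp at hx
    exact h (hasInv_of_indices hjk
      (by rw [List.getElem?_eq_getElem hj, hxj])
      (by rw [List.getElem?_eq_getElem hk, h1]))
  · by_cases h2 : u[k] = i + 1
    · rw [if_neg h1, if_pos h2] at hy
      rw [← Option.some_inj.mp hy]
    · rw [if_neg h1, if_neg h2] at hy; simp at hy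

private lemma head?_filterMap_enumFrom (c : ℕ) (bo : Bool) (σ : ℕ → ℕ) :
    ∀ (u : List ℕ) (k : ℕ),
    (((u.zipIdx k).map Prod.swap).filterMap (fun pa => if pa.2 = c then some (σ pa.1, bo) else none)).head? =
      (u.findIdx? (· == c)).map (fun p => (σ (k + p), bo)) := by
  intro u
  induction u with
  | nil => intro k; rfl
  | cons a u ih =>
    intro k
    rw [List.zipIdx_cons, List.map_cons, Prod.swap_prod_mk, List.filterMap_cons, List.findIdx?_cons]
    by_cases h : a = c
    · simp [h]
    · simp only [if_neg h, beq_iff_eq, if_neg h, ih (k+1), Option.map_map]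
      cases u.findIdx? (· == c) with
      | none => rfl
      | some p =>
        simp only [Option.map_some, Function.comp_apply]
        have h3 : k + 1 + p = k + (p + 1) := by omega
        rw [h3]

private lemma enum_reverse (u : List ℕ) :
    (u.zipIdx.map Prod.swap).reverse = ((u.reverse.zipIdx.map Prod.swap)).map (fun pa => (u.length - 1 - pa.1, pa.2)) := by
  apply List.ext_getElem (by simp)
  intro j h1 h2
  simp only [List.getElem_reverse, List.getElem_map, List.getElem_zipIdx, List.length_zipIdx,
    List.length_reverse, List.length_map, Prod.swap_prod_mk, Nat.zero_add]

private lemma reverse_set (u : List ℕ) (p : ℕ) (b : ℕ) (hp : p < u.length) :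
    (u.reverse.set p b).reverse = u.set (u.length - 1 - p) b := by
  apply List.ext_getElem (by simp)
  intro j h1 h2
  have hj : j < u.length := by simpa using h2
  simp only [List.getElem_reverse, List.getElem_set, List.length_set, List.length_reverse]
  by_cases h : u.length - 1 - p = j
  · rw [if_pos (by omega), if_pos h]
  · rw [if_neg (by omega), if_neg h]
    congr 1
    omega

end Aux

/-- Let `u ∈ 𝒜_n^*` and `i ∈ {1,…,n−1}`. If the quasi-Kashiwara operator
`e_i` is defined on `u`, then the Kashiwara operator `ẽ_i` is defined on `u` and
`ẽ_i(u) = e_i(u)`; likewise for `f_i` and `f̃_i`. -/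
theorem quasiKashiwara_restriction_of_Kashiwara (n : ℕ) (u : List ℕ) (hu : IsWord n u)
    (i : ℕ) (hi1 : 1 ≤ i) (hi2 : i < n) :
    (∀ v, qe i u = some v → KE i u = some v) ∧
    (∀ v, qf i u = some v → KF i u = some v) := by
  have hne : ¬ ((i : ℕ) = i + 1) := by omega
  have hne' : ¬ ((i + 1 : ℕ) = i) := by omega
  have henum : u.zipIdx.map Prod.swap = (u.zipIdx 0).map Prod.swap := rfl
  constructor
  · -- the `e_i` case
    intro v hv
    rw [qe] at hv
    split_ifs at hv with hni
    rw [replaceFirst_eq_findIdx] at hv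
    obtain ⟨p, hp, hset⟩ := Option.map_eq_some_iff.mp hv
    rw [KE, reduce_eq_self (signWord_pairwise hni), signWord, List.filter_filterMap]
    have hfun : (fun pa : ℕ × ℕ => (if pa.2 = i then some (pa.1, true)
          else if pa.2 = i + 1 then some (pa.1, false) else none).filter (fun x => !x.2))
        = fun pa : ℕ × ℕ => if pa.2 = i + 1 then some (id pa.1, false) else none := by
      funext pa
      by_cases h1 : pa.2 = i
      · simp [h1, Option.filter, hne]
      · by_cases h2 : pa.2 = i + 1
        · simp [h1, h2, Option.filter]
        · simp [h1, h2, Option.filter]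
    rw [henum, hfun, head?_filterMap_enumFrom (i + 1) false id u 0, hp]
    simp [hset]
  · -- the `f_i` case
    intro v hv
    rw [qf] at hv
    split_ifs at hv with hni
    rw [replaceFirst_eq_findIdx] at hv
    rw [Option.map_map] at hv
    obtain ⟨p, hp, hset⟩ := Option.map_eq_some_iff.mp hv
    have hplt : p < u.length := by
      obtain ⟨h, -⟩ := List.findIdx?_eq_some_iff_getElem.mp hp
      simpa using h
    have hv' : u.set (u.length - 1 - p) (i + 1) = v := by
      rw [← reverse_set u p (i + 1) hplt]
      exact hset
    rw [KF, reduce_eq_self (signWord_pairwise hni), signWord, List.filter_filterMap]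
    have hfun : (fun pa : ℕ × ℕ => (if pa.2 = i then some (pa.1, true)
          else if pa.2 = i + 1 then some (pa.1, false) else none).filter (fun x => x.2))
        = fun pa : ℕ × ℕ => if pa.2 = i then some (pa.1, true) else none := by
      funext pa
      by_cases h1 : pa.2 = i
      · simp [h1, Option.filter]
      · by_cases h2 : pa.2 = i + 1
        · simp [h1, h2, Option.filter]
        · simp [h1, h2, Option.filter]
    rw [hfun]
    have hlast : ((u.zipIdx.map Prod.swap).filterMap
          (fun pa : ℕ × ℕ => if pa.2 = i then some (pa.1, true) else none)).getLast?
        = some (u.length - 1 - p, true) := by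
      have hstep : ((u.zipIdx.map Prod.swap).filterMap
            (fun pa : ℕ × ℕ => if pa.2 = i then some (pa.1, true) else none)).getLast?
          = (((u.zipIdx.map Prod.swap).filterMap
            (fun pa : ℕ × ℕ => if pa.2 = i then some (pa.1, true) else none)).reverse).head? := by
        rw [List.head?_eq_getLast?_reverse, List.reverse_reverse]
      rw [hstep, ← List.filterMap_reverse, enum_reverse u, List.filterMap_map]
      have hcomp : ((fun pa : ℕ × ℕ => if pa.2 = i then some (pa.1, true) else none) ∘
            (fun pa : ℕ × ℕ => (u.length - 1 - pa.1, pa.2)))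
          = fun pa : ℕ × ℕ => if pa.2 = i then some ((fun t => u.length - 1 - t) pa.1, true)
              else none := by
        funext pa
        by_cases h1 : pa.2 = i <;> simp [h1, Function.comp]
      rw [hcomp, show u.reverse.zipIdx.map Prod.swap = (u.reverse.zipIdx 0).map Prod.swap from rfl,
        head?_filterMap_enumFrom i true (fun t => u.length - 1 - t) u.reverse 0, hp]
      simp
    rw [hlast]
    simp [hv']

end HypoCrystal
end

section
/- The relation ∼ is a congruence on the free monoid 𝒜_n^*: it is an equivalence relation, and whenever u ∼ v and u' ∼ v', one has uu' ∼ vv'. -/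
namespace HypoCrystal

/-! ### Auxiliary lemmas -/

section Aux

/-! #### `replaceFirst` -/

lemma replaceFirst_eq_none {a b : ℕ} {l : List ℕ} (h : a ∉ l) :
    replaceFirst a b l = none := by
  induction l with
  | nil => rfl
  | cons x xs ih =>
    simp only [List.mem_cons, not_or] at h
    rw [replaceFirst, if_neg (fun hx => h.1 hx.symm), ih h.2]
    rfl

lemma mem_of_replaceFirst {a b : ℕ} {l l' : List ℕ}
    (h : replaceFirst a b l = some l') : a ∈ l := by
  by_contra hm
  rw [replaceFirst_eq_none hm] at h
  cases h

lemma length_replaceFirst {a b : ℕ} : ∀ {l l' : List ℕ},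
    replaceFirst a b l = some l' → l'.length = l.length := by
  intro l
  induction l with
  | nil => intro l' h; simp [replaceFirst] at h
  | cons x xs ih =>
    intro l' h
    rw [replaceFirst] at h
    by_cases hx : x = a
    · rw [if_pos hx] at h
      cases h
      simp
    · rw [if_neg hx] at h
      rw [Option.map_eq_some_iff] at h
      obtain ⟨m, hm, rfl⟩ := h
      simp [ih hm]

lemma replaceFirst_append_left {a b : ℕ} {l : List ℕ} (m : List ℕ) (h : a ∈ l) :
    replaceFirst a b (l ++ m) = (replaceFirst a b l).map (· ++ m) := by
  induction l with
  | nil => exact absurd h List.not_mem_nil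
  | cons x xs ih =>
    by_cases hx : x = a
    · simp [replaceFirst, hx]
    · have hm : a ∈ xs := by
        rcases List.mem_cons.mp h with h1 | h1
        · exact absurd h1.symm hx
        · exact h1
      rw [List.cons_append, replaceFirst, if_neg hx, replaceFirst, if_neg hx, ih hm]
      cases replaceFirst a b xs <;> simp

lemma replaceFirst_append_right {a b : ℕ} {l : List ℕ} (m : List ℕ) (h : a ∉ l) :
    replaceFirst a b (l ++ m) = (replaceFirst a b m).map (l ++ ·) := by
  induction l with
  | nil => cases h' : replaceFirst a b m <;> simp [h']
  | cons x xs ih =>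
    simp only [List.mem_cons, not_or] at h
    rw [List.cons_append, replaceFirst, if_neg (fun hx => h.1 hx.symm),
      ih h.2]
    cases replaceFirst a b m <;> simp

/-! #### `HasInv` -/

@[simp] lemma hasInv_nil {i : ℕ} : ¬ HasInv i ([] : List ℕ) := by
  rintro ⟨v, w, x, h⟩
  cases v <;> simp at h

lemma hasInv_cons {i a : ℕ} {t : List ℕ} :
    HasInv i (a :: t) ↔ (a = i + 1 ∧ i ∈ t) ∨ HasInv i t := by
  constructor
  · rintro ⟨v, w, x, h⟩
    cases v with
    | nil =>
      rw [List.nil_append] at h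
      injection h with h1 h2
      exact Or.inl ⟨h1, by rw [h2]; simp⟩
    | cons c v' =>
      rw [List.cons_append] at h
      injection h with h1 h2
      exact Or.inr ⟨v', w, x, h2⟩
  · rintro (⟨rfl, hm⟩ | ⟨v, w, x, rfl⟩)
    · obtain ⟨s, t', rfl⟩ := List.append_of_mem hm
      exact ⟨[], s, t', by simp⟩
    · exact ⟨a :: v, w, x, rfl⟩

lemma mem_of_hasInv {i : ℕ} {u : List ℕ} (h : HasInv i u) :
    (i + 1) ∈ u ∧ i ∈ u := by
  obtain ⟨v, w, x, rfl⟩ := h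
  simp

lemma hasInv_append {i : ℕ} {x y : List ℕ} :
    HasInv i (x ++ y) ↔ HasInv i x ∨ HasInv i y ∨ ((i + 1) ∈ x ∧ i ∈ y) := by
  induction x with
  | nil => simp
  | cons a xs ih =>
    rw [List.cons_append, hasInv_cons, ih, hasInv_cons]
    simp only [List.mem_append, List.mem_cons]
    constructor
    · rintro (⟨rfl, (h | h)⟩ | h | h | h)
      · exact Or.inl (Or.inl ⟨rfl, h⟩)
      · exact Or.inr (Or.inr ⟨Or.inl rfl, h⟩)
      · exact Or.inl (Or.inr h)
      · exact Or.inr (Or.inl h)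
      · exact Or.inr (Or.inr ⟨Or.inr h.1, h.2⟩)
    · rintro ((⟨rfl, h⟩ | h) | h | ⟨(h1 | h1), h2⟩)
      · exact Or.inl ⟨rfl, Or.inl h⟩
      · exact Or.inr (Or.inl h)
      · exact Or.inr (Or.inr (Or.inl h))
      · exact Or.inl ⟨h1.symm, Or.inr h2⟩
      · exact Or.inr (Or.inr (Or.inr ⟨h1, h2⟩))

/-! #### `qf` -/

lemma mem_of_qf {i : ℕ} {u y : List ℕ} (h : qf i u = some y) : i ∈ u := by
  rw [qf] at h
  split at h
  · cases h
  · rw [Option.map_eq_some_iff] at h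
    obtain ⟨m, hm, rfl⟩ := h
    exact List.mem_reverse.mp (mem_of_replaceFirst hm)

lemma length_qf {i : ℕ} {u y : List ℕ} (h : qf i u = some y) :
    y.length = u.length := by
  rw [qf] at h
  split at h
  · cases h
  · rw [Option.map_eq_some_iff] at h
    obtain ⟨m, hm, rfl⟩ := h
    have := length_replaceFirst hm
    simpa using this

lemma qf_append_right {i : ℕ} {x x' : List ℕ} (h : i ∉ x') :
    qf i (x ++ x') = (qf i x).map (· ++ x') := by
  have hinv : HasInv i (x ++ x') ↔ HasInv i x := by
    rw [hasInv_append]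
    constructor
    · rintro (h1 | h1 | h1)
      · exact h1
      · exact absurd (mem_of_hasInv h1).2 h
      · exact absurd h1.2 h
    · exact Or.inl
  rw [qf, qf]
  by_cases hx : HasInv i x
  · rw [if_pos (hinv.mpr hx), if_pos hx]; rfl
  · rw [if_neg (fun hc => hx (hinv.mp hc)), if_neg hx, List.reverse_append,
      replaceFirst_append_right _ (fun hc => h (List.mem_reverse.mp hc))]
    cases replaceFirst i (i + 1) x.reverse <;> simp

lemma qf_append_left {i : ℕ} {x x' : List ℕ} (h : i ∈ x') (h2 : (i + 1) ∉ x) :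
    qf i (x ++ x') = (qf i x').map (x ++ ·) := by
  have hinv : HasInv i (x ++ x') ↔ HasInv i x' := by
    rw [hasInv_append]
    constructor
    · rintro (h1 | h1 | h1)
      · exact absurd (mem_of_hasInv h1).1 h2
      · exact h1
      · exact absurd h1.1 h2
    · exact fun h1 => Or.inr (Or.inl h1)
  rw [qf, qf]
  by_cases hx : HasInv i x'
  · rw [if_pos (hinv.mpr hx), if_pos hx]; rfl
  · rw [if_neg (fun hc => hx (hinv.mp hc)), if_neg hx, List.reverse_append,
      replaceFirst_append_left _ (List.mem_reverse.mpr h)]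
    cases replaceFirst i (i + 1) x'.reverse <;> simp

lemma qf_append_none {i : ℕ} {x x' : List ℕ} (h : i ∈ x') (h2 : (i + 1) ∈ x) :
    qf i (x ++ x') = none := by
  rw [qf, if_pos]
  rw [hasInv_append]
  exact Or.inr (Or.inr ⟨h2, h⟩)

lemma edge_append_iff {n i : ℕ} {x x' w : List ℕ} :
    Edge n i (x ++ x') w ↔
      (1 ≤ i ∧ i < n) ∧
      ((∃ y, qf i x = some y ∧ i ∉ x' ∧ w = y ++ x') ∨
       (∃ y', qf i x' = some y' ∧ (i + 1) ∉ x ∧ w = x ++ y')) := by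
  unfold Edge
  by_cases h' : i ∈ x'
  · by_cases h'' : (i + 1) ∈ x
    · rw [qf_append_none h' h'']
      constructor
      · rintro ⟨-, -, h⟩; cases h
      · rintro ⟨-, (⟨y, -, hm, -⟩ | ⟨y, -, hm, -⟩)⟩
        · exact absurd h' hm
        · exact absurd h'' hm
    · rw [qf_append_left h' h'', Option.map_eq_some_iff]
      constructor
      · rintro ⟨h1, h2, y', hy', rfl⟩
        exact ⟨⟨h1, h2⟩, Or.inr ⟨y', hy', h'', rfl⟩⟩
      · rintro ⟨⟨h1, h2⟩, (⟨y, -, hm, -⟩ | ⟨y', hy', -, rfl⟩)⟩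
        · exact absurd h' hm
        · exact ⟨h1, h2, y', hy', rfl⟩
  · rw [qf_append_right h', Option.map_eq_some_iff]
    constructor
    · rintro ⟨h1, h2, y, hy, rfl⟩
      exact ⟨⟨h1, h2⟩, Or.inl ⟨y, hy, h', rfl⟩⟩
    · rintro ⟨⟨h1, h2⟩, (⟨y, hy, -, rfl⟩ | ⟨y', hy', -, -⟩)⟩
      · exact ⟨h1, h2, y, hy, rfl⟩
      · exact absurd (mem_of_qf hy') h'

/-! #### components -/

lemma length_eq_of_sameComp {n : ℕ} {a b : List ℕ} (h : SameComp n a b) :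
    b.length = a.length := by
  induction h with
  | refl => rfl
  | tail _ hadj ih =>
    obtain ⟨i, he | he⟩ := hadj
    · rw [length_qf he.2.2]; exact ih
    · rw [← length_qf he.2.2]; exact ih

lemma wt_eq_of_sameComp {n : ℕ} {a b : List ℕ} (hadj : SameComp n a b) : True := trivial

lemma sameComp_take_drop {n : ℕ} {u u' w : List ℕ} (h : SameComp n (u ++ u') w) :
    SameComp n u (w.take u.length) ∧ SameComp n u' (w.drop u.length) := by
  induction h with
  | refl => rw [List.take_left, List.drop_left]; exact ⟨.refl, .refl⟩
  | @tail b c hb hadj ih =>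
    have hlb : b.length = u.length + u'.length := by
      rw [length_eq_of_sameComp hb, List.length_append]
    have hbt : (b.take u.length).length = u.length := by
      rw [List.length_take]; omega
    obtain ⟨i, he | he⟩ := hadj
    · -- Edge b c
      have he2 : Edge n i (b.take u.length ++ b.drop u.length) c := by
        rwa [List.take_append_drop]
      rw [edge_append_iff] at he2
      obtain ⟨⟨h1, h2⟩, (⟨y, hqf, hmem, rfl⟩ | ⟨y', hqf, hmem, rfl⟩)⟩ := he2
      · have hy : y.length = u.length := by rw [length_qf hqf, hbt]
        rw [List.take_left' hy, List.drop_left' hy]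
        exact ⟨ih.1.tail ⟨i, Or.inl ⟨h1, h2, hqf⟩⟩, ih.2⟩
      · rw [List.take_left' hbt, List.drop_left' hbt]
        exact ⟨ih.1, ih.2.tail ⟨i, Or.inl ⟨h1, h2, hqf⟩⟩⟩
    · -- Edge c b
      have hlc : c.length = u.length + u'.length := by
        rw [← length_qf he.2.2]; exact hlb
      have hct : (c.take u.length).length = u.length := by
        rw [List.length_take]; omega
      have he2 : Edge n i (c.take u.length ++ c.drop u.length) b := by
        rwa [List.take_append_drop]
      rw [edge_append_iff] at he2
      obtain ⟨⟨h1, h2⟩, (⟨y, hqf, hmem, hbeq⟩ | ⟨y', hqf, hmem, hbeq⟩)⟩ := he2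
      · have hy : y.length = u.length := by rw [length_qf hqf, hct]
        have h3 : b.take u.length = y := by rw [hbeq, List.take_left' hy]
        have h4 : b.drop u.length = c.drop u.length := by
          rw [hbeq, List.drop_left' hy]
        constructor
        · rw [h3] at ih
          exact ih.1.tail ⟨i, Or.inr ⟨h1, h2, hqf⟩⟩
        · rw [h4] at ih; exact ih.2
      · have h3 : b.take u.length = c.take u.length := by
          rw [hbeq, List.take_left' hct]
        have h4 : b.drop u.length = y' := by rw [hbeq, List.drop_left' hct]
        constructor
        · rw [h3] at ih; exact ih.1
        · rw [h4] at ih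
          exact ih.2.tail ⟨i, Or.inr ⟨h1, h2, hqf⟩⟩

lemma length_eq_of_wt_eq {a b : List ℕ} (h : wt a = wt b) :
    a.length = b.length := by
  have : a.Perm b := List.perm_iff_count.mpr fun c => congrFun h c
  exact this.length_eq

lemma count_eq_of_wt_eq {a b : List ℕ} (h : wt a = wt b) (c : ℕ) :
    a.count c = b.count c := congrFun h c

/-! #### transporting edges along a pair of isomorphisms -/

lemma edge_map {n : ℕ} {u v u' v' : List ℕ} {θ θ' : List ℕ → List ℕ}
    (hθ : IsQCIso n u v θ) (hθ' : IsQCIso n u' v' θ') {w w' : List ℕ}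
    (hw : SameComp n (u ++ u') w) (hw' : SameComp n (u ++ u') w') {i : ℕ}
    (he : Edge n i w w') :
    Edge n i (θ (w.take u.length) ++ θ' (w.drop u.length))
      (θ (w'.take u.length) ++ θ' (w'.drop u.length)) := by
  obtain ⟨hwt, hwd⟩ := sameComp_take_drop hw
  obtain ⟨hwt', hwd'⟩ := sameComp_take_drop hw'
  have hlw : w.length = u.length + u'.length := by
    rw [length_eq_of_sameComp hw, List.length_append]
  have hbt : (w.take u.length).length = u.length := by
    rw [List.length_take]; omega
  have he2 : Edge n i (w.take u.length ++ w.drop u.length) w' := by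
    rwa [List.take_append_drop]
  rw [edge_append_iff] at he2
  obtain ⟨⟨h1, h2⟩, (⟨y, hqf, hmem, hw'eq⟩ | ⟨y', hqf, hmem, hw'eq⟩)⟩ := he2
  · -- move in the left factor
    have hy : y.length = u.length := by rw [length_qf hqf, hbt]
    have h3 : w'.take u.length = y := by rw [hw'eq, List.take_left' hy]
    have h4 : w'.drop u.length = w.drop u.length := by
      rw [hw'eq, List.drop_left' hy]
    rw [h3, h4]
    have hycomp : SameComp n u y := h3 ▸ hwt'
    have hedge : Edge n i (θ (w.take u.length)) (θ y) :=
      (hθ.2.2 _ _ hwt hycomp i).mp ⟨h1, h2, hqf⟩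
    have hmem2 : i ∉ θ' (w.drop u.length) := by
      intro hc
      have := count_eq_of_wt_eq (hθ'.2.1 _ hwd) i
      rw [List.count_eq_zero.mpr hmem] at this
      exact (List.count_eq_zero.mp this) hc
    rw [edge_append_iff]
    exact ⟨⟨h1, h2⟩, Or.inl ⟨θ y, hedge.2.2, hmem2, rfl⟩⟩
  · -- move in the right factor
    have h3 : w'.take u.length = w.take u.length := by
      rw [hw'eq, List.take_left' hbt]
    have h4 : w'.drop u.length = y' := by rw [hw'eq, List.drop_left' hbt]
    rw [h3, h4]
    have hycomp : SameComp n u' y' := h4 ▸ hwd'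
    have hedge : Edge n i (θ' (w.drop u.length)) (θ' y') :=
      (hθ'.2.2 _ _ hwd hycomp i).mp ⟨h1, h2, hqf⟩
    have hmem2 : (i + 1) ∉ θ (w.take u.length) := by
      intro hc
      have := count_eq_of_wt_eq (hθ.2.1 _ hwt) (i + 1)
      rw [List.count_eq_zero.mpr hmem] at this
      exact (List.count_eq_zero.mp this) hc
    rw [edge_append_iff]
    exact ⟨⟨h1, h2⟩, Or.inr ⟨θ' y', hedge.2.2, hmem2, rfl⟩⟩

lemma mapsTo_pair {n : ℕ} {u v u' v' : List ℕ} {θ θ' : List ℕ → List ℕ}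
    (hθ : IsQCIso n u v θ) (hθ' : IsQCIso n u' v' θ')
    (hv : θ u = v) (hv' : θ' u' = v') :
    ∀ w, SameComp n (u ++ u') w →
      SameComp n (v ++ v') (θ (w.take u.length) ++ θ' (w.drop u.length)) := by
  intro w hw
  induction hw with
  | refl => rw [List.take_left, List.drop_left, hv, hv']; exact .refl
  | @tail b c hb hadj ih =>
    obtain ⟨i, he | he⟩ := hadj
    · exact ih.tail ⟨i, Or.inl (edge_map hθ hθ' hb (hb.tail ⟨i, Or.inl he⟩) he)⟩
    · exact ih.tail ⟨i, Or.inr (edge_map hθ hθ' (hb.tail ⟨i, Or.inr he⟩) hb he)⟩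

/-! #### inverse isomorphisms -/

lemma isQCIso_inv {n : ℕ} {u v : List ℕ} {θ : List ℕ → List ℕ}
    (hθ : IsQCIso n u v θ) (huv : θ u = v) :
    ∃ σ : List ℕ → List ℕ, IsQCIso n v u σ ∧ σ v = u ∧
      (∀ x, SameComp n u x → σ (θ x) = x) ∧
      (∀ y, SameComp n v y → θ (σ y) = y) := by
  obtain ⟨hbij, hwt, hedge⟩ := hθ
  set S : Set (List ℕ) := {x | SameComp n u x} with hS
  set T : Set (List ℕ) := {y | SameComp n v y} with hT
  set σ := Function.invFunOn θ S with hσ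
  have hinv : Set.InvOn σ θ S T := hbij.invOn_invFunOn
  have hmσ : Set.MapsTo σ T S := hbij.surjOn.mapsTo_invFunOn
  have hbij' : Set.BijOn σ T S := (hinv.symm).bijOn hmσ hbij.mapsTo
  have hleft : ∀ x, SameComp n u x → σ (θ x) = x := fun x hx => hinv.1 hx
  have hright : ∀ y, SameComp n v y → θ (σ y) = y := fun y hy => hinv.2 hy
  refine ⟨σ, ⟨hbij', ?_, ?_⟩, ?_, hleft, hright⟩
  · intro y hy
    have h1 : SameComp n u (σ y) := hmσ hy
    have := hwt _ h1
    rw [hright y hy] at this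
    exact this.symm
  · intro x y hx hy i
    have h1 : SameComp n u (σ x) := hmσ hx
    have h2 : SameComp n u (σ y) := hmσ hy
    have := hedge _ _ h1 h2 i
    rw [hright x hx, hright y hy] at this
    exact this.symm
  · have hu : SameComp n u u := .refl
    rw [← huv, hleft u hu]

end Aux

end HypoCrystal

namespace HypoCrystal

/-- The relation `∼` is a congruence on the free monoid `𝒜_n^*`:
it is reflexive, symmetric, and transitive on `𝒜_n^*`, and whenever `u ∼ v` and
`u' ∼ v'` one has `uu' ∼ vv'`. -/
theorem sim_is_congruence (n : ℕ) :
    (∀ u, IsWord n u → Sim n u u) ∧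
    (∀ u v, IsWord n u → IsWord n v → Sim n u v → Sim n v u) ∧
    (∀ u v w, IsWord n u → IsWord n v → IsWord n w →
      Sim n u v → Sim n v w → Sim n u w) ∧
    (∀ u v u' v', IsWord n u → IsWord n v → IsWord n u' → IsWord n v' →
      Sim n u v → Sim n u' v' → Sim n (u ++ u') (v ++ v')) := by
  constructor
  · -- reflexivity
    intro u _
    exact ⟨id, ⟨Set.bijOn_id _, fun x _ => rfl, fun x y _ _ i => Iff.rfl⟩, rfl⟩
  refine ⟨?_, ?_, ?_⟩
  · -- symmetry
    rintro u v _ _ ⟨θ, hθ, huv⟩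
    obtain ⟨σ, hσ, hvu, -, -⟩ := isQCIso_inv hθ huv
    exact ⟨σ, hσ, hvu⟩
  · -- transitivity
    rintro u v w _ _ _ ⟨θ, ⟨hbij, hwt, hedge⟩, huv⟩ ⟨θ', ⟨hbij', hwt', hedge'⟩, hvw⟩
    refine ⟨θ' ∘ θ, ⟨hbij'.comp hbij, ?_, ?_⟩, by simp [huv, hvw]⟩
    · intro x hx
      have h1 : SameComp n v (θ x) := hbij.mapsTo hx
      simp only [Function.comp_apply]
      rw [hwt' _ h1, hwt _ hx]
    · intro x y hx hy i
      have h1 : SameComp n v (θ x) := hbij.mapsTo hx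
      have h2 : SameComp n v (θ y) := hbij.mapsTo hy
      simp only [Function.comp_apply]
      rw [hedge _ _ hx hy i, hedge' _ _ h1 h2 i]
  · -- compatibility with concatenation
    rintro u v u' v' _ _ _ _ ⟨θ, hθ, huv⟩ ⟨θ', hθ', huv'⟩
    obtain ⟨σ, hσ, hvu, hlθ, hrθ⟩ := isQCIso_inv hθ huv
    obtain ⟨σ', hσ', hvu', hlθ', hrθ'⟩ := isQCIso_inv hθ' huv'
    have hlen : v.length = u.length := by
      have := hθ.2.1 u .refl
      rw [huv] at this
      exact length_eq_of_wt_eq this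
    set Θ : List ℕ → List ℕ :=
      fun w => θ (w.take u.length) ++ θ' (w.drop u.length) with hΘ
    set Ψ : List ℕ → List ℕ :=
      fun w => σ (w.take v.length) ++ σ' (w.drop v.length) with hΨ
    -- lengths of images
    have hθlen : ∀ x, SameComp n u x → (θ x).length = u.length := by
      intro x hx
      rw [length_eq_of_wt_eq (hθ.2.1 x hx), length_eq_of_sameComp hx]
    have hσlen : ∀ x, SameComp n v x → (σ x).length = v.length := by
      intro x hx
      rw [length_eq_of_wt_eq (hσ.2.1 x hx), length_eq_of_sameComp hx]
    -- the two maps are mutually inverse on the components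
    have hΨΘ : ∀ w, SameComp n (u ++ u') w → Ψ (Θ w) = w := by
      intro w hw
      obtain ⟨h1, h2⟩ := sameComp_take_drop hw
      have hl : (θ (w.take u.length)).length = v.length := by
        rw [hθlen _ h1, hlen]
      simp only [hΘ, hΨ]
      rw [List.take_left' hl, List.drop_left' hl, hlθ _ h1, hlθ' _ h2,
        List.take_append_drop]
    have hΘΨ : ∀ w, SameComp n (v ++ v') w → Θ (Ψ w) = w := by
      intro w hw
      obtain ⟨h1, h2⟩ := sameComp_take_drop hw
      have hl : (σ (w.take v.length)).length = u.length := by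
        rw [hσlen _ h1, hlen]
      simp only [hΘ, hΨ]
      rw [List.take_left' hl, List.drop_left' hl, hrθ _ h1, hrθ' _ h2,
        List.take_append_drop]
    have hmΘ : ∀ w, SameComp n (u ++ u') w → SameComp n (v ++ v') (Θ w) :=
      mapsTo_pair hθ hθ' huv huv'
    have hmΨ : ∀ w, SameComp n (v ++ v') w → SameComp n (u ++ u') (Ψ w) :=
      mapsTo_pair hσ hσ' hvu hvu'
    refine ⟨Θ, ⟨?_, ?_, ?_⟩, ?_⟩
    · -- bijectivity
      refine Set.InvOn.bijOn ⟨?_, ?_⟩ (fun w hw => hmΘ w hw) (fun w hw => hmΨ w hw)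
      · intro w hw; exact hΨΘ w hw
      · intro w hw; exact hΘΨ w hw
    · -- weights
      intro w hw
      obtain ⟨h1, h2⟩ := sameComp_take_drop hw
      funext a
      show List.count a _ = List.count a w
      conv_rhs => rw [← List.take_append_drop u.length w]
      simp only [hΘ, List.count_append]
      rw [count_eq_of_wt_eq (hθ.2.1 _ h1) a, count_eq_of_wt_eq (hθ'.2.1 _ h2) a]
    · -- edges
      intro x y hx hy i
      constructor
      · exact fun he => edge_map hθ hθ' hx hy he
      · intro he
        have hx1 := (sameComp_take_drop hx).1
        have hx2 := (sameComp_take_drop hx).2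
        have hy1 := (sameComp_take_drop hy).1
        have hy2 := (sameComp_take_drop hy).2
        have h1 := edge_map hσ hσ' (hmΘ x hx) (hmΘ y hy) he
        have e1 : (θ (x.take u.length) ++ θ' (x.drop u.length)).take v.length
            = θ (x.take u.length) := List.take_left' (by rw [hθlen _ hx1, hlen])
        have e2 : (θ (x.take u.length) ++ θ' (x.drop u.length)).drop v.length
            = θ' (x.drop u.length) := List.drop_left' (by rw [hθlen _ hx1, hlen])
        have e3 : (θ (y.take u.length) ++ θ' (y.drop u.length)).take v.length
            = θ (y.take u.length) := List.take_left' (by rw [hθlen _ hy1, hlen])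
        have e4 : (θ (y.take u.length) ++ θ' (y.drop u.length)).drop v.length
            = θ' (y.drop u.length) := List.drop_left' (by rw [hθlen _ hy1, hlen])
        simp only [hΘ] at h1
        rwa [e1, e2, e3, e4, hlθ _ hx1, hlθ' _ hx2, hlθ _ hy1, hlθ' _ hy2,
          List.take_append_drop, List.take_append_drop] at h1
    · -- value at `u ++ u'`
      simp only [hΘ]
      rw [List.take_left, List.drop_left, huv, huv']


end HypoCrystal
end

section
/- If u ∈ 𝒜_n^* is a quasi-ribbon word, then every word in the connected component Γ(hypo_n, u) of the quasi-crystal graph is a quasi-ribbon word, and every such word has the same shape as u. -/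
namespace HypoCrystal

private lemma decFactors_flatten (w : List ℕ) : (decFactors w).flatten = w := by
  induction w with
  | nil => rfl
  | cons a rest ih =>
    rcases h : decFactors rest with _ | ⟨c, fs⟩
    · rw [h] at ih; simp at ih; simp [decFactors, h, ih]
    · rcases c with _ | ⟨b, f⟩ <;> rw [h] at ih <;> simp at ih
      · simp [decFactors, h]; simpa using ih
      · simp only [decFactors, h]
        split <;> simp [ih]

private lemma ne_nil_of_mem_decFactors : ∀ {w c : List ℕ}, c ∈ decFactors w → c ≠ [] := by
  intro w
  induction w with
  | nil => intro c h; simp [decFactors] at h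
  | cons a rest ih =>
    intro c h
    rcases hd : decFactors rest with _ | ⟨d, fs⟩ <;> simp only [decFactors, hd] at h
    · simp at h; simp [h]
    · rcases d with _ | ⟨b, f⟩
      · exact absurd rfl (ih (hd ▸ List.mem_cons_self))
      · have h2 : c ∈ if b < a then (a :: b :: f) :: fs else [a] :: (b :: f) :: fs := h
        by_cases hba : b < a
        · rw [if_pos hba] at h2
          rcases List.mem_cons.mp h2 with rfl | h3
          · simp
          · exact ih (hd ▸ List.mem_cons_of_mem _ h3)
        · rw [if_neg hba] at h2
          rcases List.mem_cons.mp h2 with rfl | h3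
          · simp
          · exact ih (hd ▸ h3)



private lemma decFactors_cons_eq {c : ℕ} {w : List ℕ} {b : ℕ} {t : List ℕ} {L : List (List ℕ)}
    (h : decFactors w = (b :: t) :: L) :
    decFactors (c :: w) = if b < c then (c :: b :: t) :: L else [c] :: (b :: t) :: L := by
  simp only [decFactors, h]

private lemma decFactors_cons_nil {c : ℕ} {w : List ℕ} (h : decFactors w = []) :
    decFactors (c :: w) = [[c]] := by
  simp only [decFactors, h]



private lemma main_decomp (i : ℕ) : ∀ p s : List ℕ,
    (∀ x ∈ p, x ≠ i + 1) → (∀ x ∈ s, x ≠ i) →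
    ∃ F f g G,
      decFactors (p ++ i :: s) = F ++ (f ++ i :: g) :: G ∧
      decFactors (p ++ (i + 1) :: s) = F ++ (f ++ (i + 1) :: g) :: G ∧
      (∀ x ∈ F.flatten, x ≠ i + 1) ∧ (∀ x ∈ f, x ≠ i + 1) ∧
      (∀ x ∈ g, x ≠ i) ∧ (∀ x ∈ G.flatten, x ≠ i) := by
  intro p
  induction p with
  | nil =>
    intro s _ hs
    rcases hd : decFactors s with _ | ⟨d, fs⟩
    · have hs0 : s = [] := by
        have := decFactors_flatten s; rw [hd] at this; simpa using this.symm
      subst hs0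
      refine ⟨[], [], [], [], ?_, ?_, by simp, by simp, by simp, by simp⟩
      · simp only [List.nil_append]
        rw [decFactors_cons_nil hd]
      · simp only [List.nil_append]
        rw [decFactors_cons_nil hd]
    · rcases d with _ | ⟨b, t⟩
      · exact absurd rfl (ne_nil_of_mem_decFactors (hd ▸ List.mem_cons_self))
      · have hflat : b :: (t ++ fs.flatten) = s := by
          have := decFactors_flatten s; rw [hd] at this; simpa using this
        have hmem : ∀ x, (x = b ∨ x ∈ t ∨ x ∈ fs.flatten) → x ≠ i := by
          intro x hx
          refine hs x ?_
          rw [← hflat]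
          simp only [List.mem_cons, List.mem_append]
          tauto
        have hbi : b ≠ i := hmem b (Or.inl rfl)
        by_cases hlt : b < i
        · have hlt' : b < i + 1 := by omega
          refine ⟨[], [], b :: t, fs, ?_, ?_, by simp, by simp, ?_, ?_⟩
          · rw [List.nil_append, decFactors_cons_eq hd, if_pos hlt]; simp
          · rw [List.nil_append, decFactors_cons_eq hd, if_pos hlt']; simp
          · intro x hx
            refine hmem x ?_
            rcases List.mem_cons.mp hx with rfl | h <;> tauto
          · intro x hx
            refine hmem x ?_
            right; right; exact hx
        · have hlt' : ¬ b < i + 1 := by omega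
          refine ⟨[], [], [], (b :: t) :: fs, ?_, ?_, by simp, by simp, by simp, ?_⟩
          · rw [List.nil_append, decFactors_cons_eq hd, if_neg hlt]; simp
          · rw [List.nil_append, decFactors_cons_eq hd, if_neg hlt']; simp
          · intro x hx
            refine hmem x ?_
            simp only [List.flatten_cons, List.mem_append, List.mem_cons, List.mem_flatten] at hx
            rcases hx with (rfl | h) | h
            · tauto
            · tauto
            · right; right; simp only [List.mem_flatten]; exact h
  | cons c p' ih =>
    intro s hp hs
    have hc : c ≠ i + 1 := hp c (List.mem_cons_self)
    obtain ⟨F, f, g, G, h1, h2, hF, hf, hg, hG⟩ :=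
      ih s (fun x hx => hp x (List.mem_cons_of_mem _ hx)) hs
    rcases F with _ | ⟨F0, F'⟩
    · rcases f with _ | ⟨f0, f'⟩
      · have h1' : decFactors (p' ++ i :: s) = (i :: g) :: G := by simpa using h1
        have h2' : decFactors (p' ++ (i + 1) :: s) = ((i + 1) :: g) :: G := by simpa using h2
        by_cases hci : i < c
        · have hci' : i + 1 < c := by omega
          refine ⟨[], [c], g, G, ?_, ?_, by simp, by simpa using hc, hg, hG⟩
          · rw [List.cons_append, decFactors_cons_eq h1', if_pos hci]; simp
          · rw [List.cons_append, decFactors_cons_eq h2', if_pos hci']; simp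
        · have hci' : ¬ i + 1 < c := by omega
          refine ⟨[[c]], [], g, G, ?_, ?_, by simpa using hc, by simp, hg, hG⟩
          · rw [List.cons_append, decFactors_cons_eq h1', if_neg hci]
            first | rfl | simp
          · rw [List.cons_append, decFactors_cons_eq h2', if_neg hci']
            first | rfl | simp
      · have h1' : decFactors (p' ++ i :: s) = (f0 :: (f' ++ i :: g)) :: G := by simpa using h1
        have h2' : decFactors (p' ++ (i + 1) :: s) = (f0 :: (f' ++ (i + 1) :: g)) :: G := by
          simpa using h2
        by_cases hfc : f0 < c
        · refine ⟨[], c :: f0 :: f', g, G, ?_, ?_, by simp, ?_, hg, hG⟩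
          · rw [List.cons_append, decFactors_cons_eq h1', if_pos hfc]; simp
          · rw [List.cons_append, decFactors_cons_eq h2', if_pos hfc]; simp
          · intro x hx
            rcases List.mem_cons.mp hx with rfl | hx'
            · exact hc
            · exact hf x hx'
        · refine ⟨[[c]], f0 :: f', g, G, ?_, ?_, by simpa using hc, hf, hg, hG⟩
          · rw [List.cons_append, decFactors_cons_eq h1', if_neg hfc]; simp
          · rw [List.cons_append, decFactors_cons_eq h2', if_neg hfc]; simp
    · have hF0 : F0 ≠ [] := by
        refine ne_nil_of_mem_decFactors (w := p' ++ i :: s) ?_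
        rw [h1]; simp
      obtain ⟨b, t, rfl⟩ : ∃ b t, F0 = b :: t := by
        cases F0 with
        | nil => exact absurd rfl hF0
        | cons b t => exact ⟨b, t, rfl⟩
      have hb : b ≠ i + 1 := hF b (by simp)
      have h1' : decFactors (p' ++ i :: s)
          = (b :: t) :: (F' ++ (f ++ i :: g) :: G) := by simpa using h1
      have h2' : decFactors (p' ++ (i + 1) :: s)
          = (b :: t) :: (F' ++ (f ++ (i + 1) :: g) :: G) := by simpa using h2
      by_cases hbc : b < c
      · refine ⟨(c :: b :: t) :: F', f, g, G, ?_, ?_, ?_, hf, hg, hG⟩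
        · rw [List.cons_append, decFactors_cons_eq h1', if_pos hbc]; simp
        · rw [List.cons_append, decFactors_cons_eq h2', if_pos hbc]; simp
        · intro x hx
          obtain ⟨l, hl, hxl⟩ := List.mem_flatten.mp hx
          rcases List.mem_cons.mp hl with rfl | hl'
          · rcases List.mem_cons.mp hxl with rfl | h'
            · exact hc
            · exact hF x (List.mem_flatten.mpr ⟨b :: t, List.mem_cons_self, h'⟩)
          · exact hF x (List.mem_flatten.mpr ⟨l, List.mem_cons_of_mem _ hl', hxl⟩)
      · refine ⟨[c] :: (b :: t) :: F', f, g, G, ?_, ?_, ?_, hf, hg, hG⟩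
        · rw [List.cons_append, decFactors_cons_eq h1', if_neg hbc]; simp
        · rw [List.cons_append, decFactors_cons_eq h2', if_neg hbc]; simp
        · intro x hx
          obtain ⟨l, hl, hxl⟩ := List.mem_flatten.mp hx
          rcases List.mem_cons.mp hl with rfl | hl'
          · rw [List.mem_singleton] at hxl; subst hxl; exact hc
          · exact hF x (List.mem_flatten.mpr ⟨l, hl', hxl⟩)

private lemma getLastD_cons' (a d : ℕ) (g : List ℕ) :
    (a :: g).getLastD d = g.getLastD a := by
  cases g <;> simp [List.getLastD]

private lemma getLastD_append_cons (f : List ℕ) (a : ℕ) (g : List ℕ) :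
    ∀ d, (f ++ a :: g).getLastD d = g.getLastD a := by
  induction f with
  | nil => intro d; exact getLastD_cons' a d g
  | cons x xs ih => intro d; rw [List.cons_append, getLastD_cons']; exact ih x

private lemma getLastD_mem : ∀ (g : List ℕ) (a d : ℕ), (a :: g).getLastD d ∈ a :: g := by
  intro g
  induction g with
  | nil => intro a d; simp [List.getLastD]
  | cons b g' ih =>
    intro a d
    rw [getLastD_cons']
    exact List.mem_cons_of_mem _ (ih b a)

private lemma headD_append_cons (f : List ℕ) (a : ℕ) (g : List ℕ) :
    (f ++ a :: g).headD 0 = f.headD a := by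
  cases f <;> rfl

private lemma chain_iff (i : ℕ) (F G : List (List ℕ)) (f g : List ℕ)
    (hF : ∀ x ∈ F.flatten, x ≠ i + 1)
    (hg : ∀ x ∈ g, x ≠ i) (hG : ∀ x ∈ G.flatten, x ≠ i)
    (hFne : ∀ c ∈ F, c ≠ []) (hGne : ∀ c ∈ G, c ≠ []) :
    ((F ++ (f ++ i :: g) :: G).Chain' fun c d => c.headD 0 ≤ d.getLastD 0) ↔
    ((F ++ (f ++ (i + 1) :: g) :: G).Chain' fun c d => c.headD 0 ≤ d.getLastD 0) := by
  show List.IsChain _ _ ↔ List.IsChain _ _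
  rw [List.isChain_append, List.isChain_append, List.isChain_cons, List.isChain_cons]
  have hA : (∀ y ∈ G.head?, (f ++ i :: g).headD 0 ≤ y.getLastD 0) ↔
      (∀ y ∈ G.head?, (f ++ (i + 1) :: g).headD 0 ≤ y.getLastD 0) := by
    cases G with
    | nil => simp
    | cons y G' =>
      simp only [List.head?_cons, Option.mem_some_iff, forall_eq, forall_eq']
      rw [headD_append_cons, headD_append_cons]
      cases f with
      | cons f0 f' => simp
      | nil =>
        simp only [List.headD_nil]
        obtain ⟨a, g', rfl⟩ : ∃ a g', y = a :: g' := by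
          cases hy : y with
          | nil => exact absurd (hy ▸ hGne y (List.mem_cons_self)) (by simp)
          | cons a g' => exact ⟨a, g', rfl⟩
        have hne : (a :: g').getLastD 0 ≠ i := by
          refine hG _ ?_
          exact List.mem_flatten.mpr ⟨a :: g', by simp, getLastD_mem g' a 0⟩
        constructor <;> intro h <;> omega
  have hB : (∀ x ∈ F.getLast?, x.headD 0 ≤ (f ++ i :: g).getLastD 0) ↔
      (∀ x ∈ F.getLast?, x.headD 0 ≤ (f ++ (i + 1) :: g).getLastD 0) := by
    rcases hL : F.getLast? with _ | x
    · simp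
    · have hxF : x ∈ F := List.mem_of_mem_getLast? (by rw [hL]; rfl)
      have hx : x ≠ [] := hFne x hxF
      simp only [Option.mem_some_iff, forall_eq']
      rw [getLastD_append_cons, getLastD_append_cons]
      cases g with
      | cons g0 g' => rw [getLastD_cons', getLastD_cons']
      | nil =>
        show x.headD 0 ≤ i ↔ x.headD 0 ≤ i + 1
        have hxh : x.headD 0 ≠ i + 1 := by
          refine hF _ ?_
          refine List.mem_flatten.mpr ⟨x, hxF, ?_⟩
          cases x with
          | nil => exact absurd rfl hx
          | cons a l => simp
        constructor <;> intro h <;> omega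
  constructor
  · rintro ⟨c1, ⟨c2, c3⟩, c4⟩
    refine ⟨c1, ⟨hA.mp c2, c3⟩, ?_⟩
    intro x hx y hy
    simp only [List.head?_cons, Option.mem_some_iff] at hy
    subst hy
    exact hB.mp (fun z hz => c4 z hz _ rfl) x hx
  · rintro ⟨c1, ⟨c2, c3⟩, c4⟩
    refine ⟨c1, ⟨hA.mpr c2, c3⟩, ?_⟩
    intro x hx y hy
    simp only [List.head?_cons, Option.mem_some_iff] at hy
    subst hy
    exact hB.mpr (fun z hz => c4 z hz _ rfl) x hx

private lemma key (i : ℕ) (P S : List ℕ)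
    (hP : ∀ x ∈ P, x ≠ i + 1) (hS : ∀ x ∈ S, x ≠ i) :
    (IsQRWord (P ++ i :: S) ↔ IsQRWord (P ++ (i + 1) :: S)) ∧
      shape (P ++ i :: S) = shape (P ++ (i + 1) :: S) := by
  obtain ⟨F, f, g, G, h1, h2, hF, hf, hg, hG⟩ := main_decomp i P S hP hS
  have hFne : ∀ c ∈ F, c ≠ [] := fun c hc =>
    ne_nil_of_mem_decFactors (by rw [h1]; exact List.mem_append_left _ hc)
  have hGne : ∀ c ∈ G, c ≠ [] := fun c hc =>
    ne_nil_of_mem_decFactors (by rw [h1]; exact List.mem_append_right _ (List.mem_cons_of_mem _ hc))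
  constructor
  · unfold IsQRWord
    rw [h1, h2]
    exact chain_iff i F G f g hF hg hG hFne hGne
  · unfold shape
    rw [h1, h2]
    congr 1
    simp

private lemma replaceFirst_some {a b : ℕ} : ∀ {l r : List ℕ}, replaceFirst a b l = some r →
    ∃ p s, l = p ++ a :: s ∧ r = p ++ b :: s ∧ ∀ x ∈ p, x ≠ a := by
  intro l
  induction l with
  | nil => intro r h; simp [replaceFirst] at h
  | cons x xs ih =>
    intro r h
    rw [replaceFirst] at h
    by_cases hx : x = a
    · rw [if_pos hx] at h
      subst hx
      exact ⟨[], xs, by simp, by simpa using (Option.some_inj.mp h).symm, by simp⟩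
    · rw [if_neg hx] at h
      obtain ⟨r', hr', hrr⟩ := Option.map_eq_some_iff.mp h
      obtain ⟨p, s, h1, h2, h3⟩ := ih hr'
      refine ⟨x :: p, s, by simp [h1], by simp [← hrr, h2], ?_⟩
      intro y hy
      rcases List.mem_cons.mp hy with rfl | hy'
      · exact hx
      · exact h3 y hy'

private lemma qf_dest {i : ℕ} {x y : List ℕ} (h : qf i x = some y) :
    ∃ P S, x = P ++ i :: S ∧ y = P ++ (i + 1) :: S ∧
      (∀ a ∈ P, a ≠ i + 1) ∧ (∀ a ∈ S, a ≠ i) := by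
  unfold qf at h
  by_cases hinv : HasInv i x
  · rw [if_pos hinv] at h; simp at h
  · rw [if_neg hinv] at h
    obtain ⟨r, hr, hrr⟩ := Option.map_eq_some_iff.mp h
    obtain ⟨p, s, h1, h2, h3⟩ := replaceFirst_some hr
    have hx : x = s.reverse ++ i :: p.reverse := by
      have := congrArg List.reverse h1
      simpa [List.reverse_append] using this
    have hy : y = s.reverse ++ (i + 1) :: p.reverse := by
      rw [← hrr, h2]
      simp [List.reverse_append]
    refine ⟨s.reverse, p.reverse, hx, hy, ?_, ?_⟩
    · intro a ha
      rintro rfl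
      obtain ⟨v, w, hvw⟩ := List.append_of_mem ha
      exact hinv ⟨v, w, p.reverse, by rw [hx, hvw]⟩
    · intro a ha
      rintro rfl
      exact h3 a (by simpa using ha) rfl


/-- If `u ∈ 𝒜_n^*` is a quasi-ribbon word, then every word in the
connected component `Γ(hypo_n, u)` of the quasi-crystal graph is a quasi-ribbon word,
and every such word has the same shape as `u`. -/
theorem component_of_quasiRibbon_word (n : ℕ) (u : List ℕ) (hu : IsWord n u)
    (hq : IsQRWord u) :
    ∀ w, SameComp n u w → IsQRWord w ∧ shape w = shape u := by
  intro w h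
  induction h with
  | refl => exact ⟨hq, rfl⟩
  | tail _ hadj ih =>
    obtain ⟨hb, hsh⟩ := ih
    obtain ⟨i, hE | hE⟩ := hadj
    · obtain ⟨P, S, hx, hy, hP, hS⟩ := qf_dest hE.2.2
      obtain ⟨hiff, hshape⟩ := key i P S hP hS
      subst hx; subst hy
      exact ⟨hiff.mp hb, by rw [← hshape]; exact hsh⟩
    · obtain ⟨P, S, hx, hy, hP, hS⟩ := qf_dest hE.2.2
      obtain ⟨hiff, hshape⟩ := key i P S hP hS
      subst hx; subst hy
      exact ⟨hiff.mpr hb, by rw [hshape]; exact hsh⟩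

end HypoCrystal
end
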